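/- Let ρ > 0 be sufficiently small and let n be sufficiently large. Suppose H is a 3-graph on n vertices with V(H) = X ∪̇ Z such that |Z| = 3(|X| − 1). Assume that for every vertex v ∈ X the number of pairs {z, z'} of distinct vertices of Z with {v, z, z'} ∉ E(H) is at most ρ·C(|Z|,2), and for every vertex v ∈ Z the number of pairs (x, z) with x ∈ X, z ∈ Z \ {v} and {v, x, z} ∉ E(H) is at most ρ·|X|·|Z|. Then for any two vertices x₀, x₁ ∈ X there is a loose Hamilton path in H from x₀ to x₁, i.e., a spanning loose path of H whose ends are x₀ and x₁. -/

import Mathlib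

/-- `v 0, v 1, …, v (2k)` is a loose path in the 3-graph `H`. -/
def IsLoosePath {α : Type*} [DecidableEq α] (H : Finset (Finset α)) (k : ℕ)
    (v : ℕ → α) : Prop :=
  Set.InjOn v (Set.Iio (2 * k + 1)) ∧
  ∀ i : ℕ, i < k → ({v (2 * i), v (2 * i + 1), v (2 * i + 2)} : Finset α) ∈ H

/-- The vertex set of the loose path `v 0, …, v (2k)`. -/
def pathVerts {α : Type*} [DecidableEq α] (k : ℕ) (v : ℕ → α) : Finset α :=
  (Finset.range (2 * k + 1)).image v

section Auxiliary

open Finset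


/-- Greedy choice of a system of distinct representatives when all sets are large. -/
lemma greedySDR {α : Type*} [DecidableEq α] [Nonempty α] :
    ∀ (m : ℕ) (A : ℕ → Finset α), (∀ j < m, m ≤ (A j).card) →
    ∃ g : ℕ → α, Set.InjOn g (Set.Iio m) ∧ ∀ j < m, g j ∈ A j := by
  intro m
  induction m with
  | zero =>
    intro A _
    exact ⟨fun _ => Classical.arbitrary α, by simp [Set.InjOn], fun j hj => by omega⟩
  | succ m ih =>
    intro A hA
    obtain ⟨g, hginj, hgA⟩ := ih A (fun j hj => le_trans (Nat.le_succ m) (hA j (by omega)))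
    have hpool : (A m \ (Finset.range m).image g).Nonempty := by
      rw [← Finset.card_pos]
      have h1 : ((Finset.range m).image g).card ≤ m := by
        calc ((Finset.range m).image g).card ≤ (Finset.range m).card := Finset.card_image_le
        _ = m := Finset.card_range m
      have h2 := Finset.le_card_sdiff ((Finset.range m).image g) (A m)
      have := hA m (Nat.lt_succ_self m)
      omega
    obtain ⟨y, hy⟩ := hpool
    rw [Finset.mem_sdiff] at hy
    refine ⟨fun j => if j = m then y else g j, ?_, ?_⟩
    · intro j1 h1 j2 h2 heq
      simp only [Set.mem_Iio] at h1 h2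
      change (if j1 = m then y else g j1) = (if j2 = m then y else g j2) at heq
      by_cases e1 : j1 = m <;> by_cases e2 : j2 = m
      · omega
      · rw [if_pos e1, if_neg e2] at heq
        exact absurd (Finset.mem_image.2 ⟨j2, Finset.mem_range.2 (by omega), heq.symm⟩) hy.2
      · rw [if_neg e1, if_pos e2] at heq
        exact absurd (Finset.mem_image.2 ⟨j1, Finset.mem_range.2 (by omega), heq⟩) hy.2
      · rw [if_neg e1, if_neg e2] at heq
        exact hginj (by simp only [Set.mem_Iio]; omega) (by simp only [Set.mem_Iio]; omega) heq
    · intro j hj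
      by_cases e : j = m
      · simp [e, hy.1]
      · simp only [e, reduceIte]
        exact hgA j (by omega)

/-- Enumeration of a finset. -/
lemma enumFinset {α : Type*} [DecidableEq α] (s : Finset α) (d : α) :
    ∃ g : ℕ → α, Set.InjOn g (Set.Iio s.card) ∧ ∀ i < s.card, g i ∈ s := by
  classical
  refine ⟨fun i => s.toList.getD i d, ?_, ?_⟩
  · intro i hi j hj heq
    simp only [Set.mem_Iio, ← Finset.length_toList s] at hi hj
    have heq2 : s.toList.getD i d = s.toList.getD j d := heq
    rw [List.getD_eq_getElem _ _ hi, List.getD_eq_getElem _ _ hj] at heq2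
    exact (List.Nodup.getElem_inj_iff s.nodup_toList).1 heq2
  · intro i hi
    rw [← Finset.length_toList s] at hi
    have : s.toList.getD i d = s.toList[i] := List.getD_eq_getElem _ _ hi
    simp only [this]
    exact Finset.mem_toList.1 (List.getElem_mem _)

/-- Enumeration of a finset with prescribed distinct first and last elements. -/
lemma enumFinsetEnds {α : Type*} [DecidableEq α] (s : Finset α) {x₀ x₁ : α}
    (h0 : x₀ ∈ s) (h1 : x₁ ∈ s) (hne : x₀ ≠ x₁) :
    ∃ u : ℕ → α, Set.InjOn u (Set.Iio s.card) ∧ (∀ i < s.card, u i ∈ s) ∧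
      u 0 = x₀ ∧ u (s.card - 1) = x₁ := by
  classical
  have hcard2 : 2 ≤ s.card := by
    have hsub : ({x₀, x₁} : Finset α) ⊆ s := by
      intro y hy; rcases Finset.mem_insert.1 hy with h | h
      · exact h ▸ h0
      · exact (Finset.mem_singleton.1 h) ▸ h1
    calc 2 = ({x₀, x₁} : Finset α).card := (Finset.card_pair hne).symm
    _ ≤ s.card := Finset.card_le_card hsub
  obtain ⟨g, hginj, hgs⟩ := enumFinset ((s.erase x₀).erase x₁) x₀
  have hx₁e : x₁ ∈ s.erase x₀ := Finset.mem_erase.2 ⟨hne.symm, h1⟩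
  have hc : ((s.erase x₀).erase x₁).card = s.card - 2 := by
    rw [Finset.card_erase_of_mem hx₁e, Finset.card_erase_of_mem h0]
    omega
  have hgmem : ∀ k, 0 < k → k ≠ s.card - 1 → k < s.card →
      g (k-1) ∈ s ∧ g (k-1) ≠ x₀ ∧ g (k-1) ≠ x₁ := by
    intro k hk1 hk2 hk3
    have hm := hgs (k-1) (by omega)
    have h2 := Finset.mem_erase.1 hm
    have h3 := Finset.mem_erase.1 h2.2
    exact ⟨h3.2, h3.1, h2.1⟩
  refine ⟨fun i => if i = 0 then x₀ else if i = s.card - 1 then x₁ else g (i - 1), ?_, ?_, ?_, ?_⟩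
  · intro i hi j hj heq
    simp only [Set.mem_Iio] at hi hj
    change (if i = 0 then x₀ else if i = s.card - 1 then x₁ else g (i - 1))
      = (if j = 0 then x₀ else if j = s.card - 1 then x₁ else g (j - 1)) at heq
    by_cases e1 : i = 0 <;> by_cases f1 : i = s.card - 1 <;>
      by_cases e2 : j = 0 <;> by_cases f2 : j = s.card - 1 <;> try omega
    · rw [if_pos e1, if_neg e2, if_pos f2] at heq
      exact (hne heq).elim
    · rw [if_pos e1, if_neg e2, if_neg f2] at heq
      exact ((hgmem j (by omega) f2 hj).2.1 heq.symm).elim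
    · rw [if_neg e1, if_pos f1, if_pos e2] at heq
      exact (hne heq.symm).elim
    · rw [if_neg e1, if_pos f1, if_neg e2, if_neg f2] at heq
      exact ((hgmem j (by omega) f2 hj).2.2 heq.symm).elim
    · rw [if_neg e1, if_neg f1, if_pos e2] at heq
      exact ((hgmem i (by omega) f1 hi).2.1 heq).elim
    · rw [if_neg e1, if_neg f1, if_neg e2, if_pos f2] at heq
      exact ((hgmem i (by omega) f1 hi).2.2 heq).elim
    · rw [if_neg e1, if_neg f1, if_neg e2, if_neg f2] at heq
      have := hginj (show i - 1 ∈ Set.Iio _ by simp only [Set.mem_Iio]; omega)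
        (show j - 1 ∈ Set.Iio _ by simp only [Set.mem_Iio]; omega) heq
      omega
  · intro i hi
    show (if i = 0 then x₀ else if i = s.card - 1 then x₁ else g (i - 1)) ∈ s
    by_cases e1 : i = 0
    · rw [if_pos e1]; exact h0
    · by_cases f1 : i = s.card - 1
      · rw [if_neg e1, if_pos f1]; exact h1
      · rw [if_neg e1, if_neg f1]
        exact (hgmem i (by omega) f1 hi).1
  · simp
  · have h2 : s.card - 1 ≠ 0 := by omega
    simp [h2]

/-- Markov / threshold bound. -/
lemma thresholdCard {α : Type*} (s : Finset α) (w : α → ℕ) (θ : ℕ)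
    [DecidablePred fun a => θ ≤ w a] :
    (s.filter (fun a => θ ≤ w a)).card * θ ≤ ∑ a ∈ s, w a := by
  calc (s.filter (fun a => θ ≤ w a)).card * θ = ∑ _a ∈ s.filter (fun a => θ ≤ w a), θ := by
        rw [Finset.sum_const, smul_eq_mul]
  _ ≤ ∑ a ∈ s.filter (fun a => θ ≤ w a), w a :=
      Finset.sum_le_sum (fun a ha => (Finset.mem_filter.1 ha).2)
  _ ≤ ∑ a ∈ s, w a := Finset.sum_le_sum_of_subset (Finset.filter_subset _ _)

/-- Fubini for filtered products. -/
lemma cardFilterProduct {α β : Type*} [DecidableEq α] [DecidableEq β] (s : Finset α)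
    (t : Finset β) (P : α → β → Prop) [∀ a b, Decidable (P a b)] :
    ((s ×ˢ t).filter (fun p => P p.1 p.2)).card = ∑ a ∈ s, (t.filter (P a)).card := by
  simp only [Finset.card_filter]
  rw [Finset.sum_product]

/-- swap of summation for counting. -/
lemma sumCardSwap {α : Type*} (s : Finset α) (k : ℕ) (P : α → ℕ → Prop)
    [∀ a j, Decidable (P a j)] :
    ∑ z ∈ s, ((Finset.range k).filter (P z)).card
      = ∑ j ∈ Finset.range k, (s.filter (fun z => P z j)).card := by
  simp only [Finset.card_filter]
  exact Finset.sum_comm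


variable {n : ℕ}

/-- The set of `z' ∈ Z` such that the triple `{z, x, z'}` is missing from `H`. -/
def Miss (H : Finset (Finset (Fin n))) (Z : Finset (Fin n)) (x z : Fin n) : Finset (Fin n) :=
  (Z.erase z).filter (fun z' => ({z, x, z'} : Finset (Fin n)) ∉ H)

/-- Vertices `b ∈ Z` that are bad partners for `x`. -/
def xbad (H : Finset (Finset (Fin n))) (Z : Finset (Fin n)) (x : Fin n) : Finset (Fin n) :=
  Z.filter (fun b => Z.card ≤ 100 * (Miss H Z x b).card)

/-- Vertices `x ∈ X` that are bad partners for `z`. -/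
def zbad (H : Finset (Finset (Fin n))) (X Z : Finset (Fin n)) (z : Fin n) : Finset (Fin n) :=
  X.filter (fun x => Z.card ≤ 4 * (Miss H Z x z).card)

lemma missSum (H : Finset (Finset (Fin n))) (Z : Finset (Fin n)) (x : Fin n) :
    ∑ b ∈ Z, (Miss H Z x b).card
      ≤ 4 * ((Z.powersetCard 2).filter (fun p => insert x p ∉ H)).card := by
  classical
  have h1 : ∀ b, Miss H Z x b
      = Z.filter (fun z' => z' ≠ b ∧ ({b, x, z'} : Finset (Fin n)) ∉ H) := by
    intro b
    rw [Miss, ← Finset.filter_ne' Z b, Finset.filter_filter]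
  set W : Finset (Fin n × Fin n) :=
    (Z ×ˢ Z).filter (fun p => p.2 ≠ p.1 ∧ ({p.1, x, p.2} : Finset (Fin n)) ∉ H) with hW
  have h2 : ∑ b ∈ Z, (Miss H Z x b).card = W.card := by
    rw [hW, cardFilterProduct Z Z (fun b z' => z' ≠ b ∧ ({b, x, z'} : Finset (Fin n)) ∉ H)]
    exact Finset.sum_congr rfl (fun b _ => by rw [h1 b])
  have hWmem : ∀ p ∈ W, p.1 ∈ Z ∧ p.2 ∈ Z ∧ p.2 ≠ p.1 ∧ ({p.1, x, p.2} : Finset (Fin n)) ∉ H := by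
    intro p hp
    have h3 := Finset.mem_filter.1 hp
    have h4 := Finset.mem_product.1 h3.1
    exact ⟨h4.1, h4.2, h3.2.1, h3.2.2⟩
  have h5 : W.card ≤ 4 * (W.image (fun p => ({p.1, p.2} : Finset (Fin n)))).card := by
    apply Finset.card_le_mul_card_image
    intro e he
    obtain ⟨p0, hp0, hp0e⟩ := Finset.mem_image.1 he
    have hcard : e.card = 2 := by
      rw [← hp0e]; exact Finset.card_pair (fun h => (hWmem p0 hp0).2.2.1 h.symm)
    calc (W.filter (fun p => ({p.1, p.2} : Finset (Fin n)) = e)).card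
        ≤ (e ×ˢ e).card := by
          apply Finset.card_le_card
          intro p hp
          have h6 := Finset.mem_filter.1 hp
          rw [Finset.mem_product, ← h6.2]
          exact ⟨Finset.mem_insert_self _ _,
            Finset.mem_insert_of_mem (Finset.mem_singleton_self _)⟩
    _ = 4 := by rw [Finset.card_product, hcard]
  have h7 : (W.image (fun p => ({p.1, p.2} : Finset (Fin n)))).card
      ≤ ((Z.powersetCard 2).filter (fun p => insert x p ∉ H)).card := by
    apply Finset.card_le_card
    intro e he
    obtain ⟨p0, hp0, hp0e⟩ := Finset.mem_image.1 he
    obtain ⟨hz1, hz2, hne, hmiss⟩ := hWmem p0 hp0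
    rw [Finset.mem_filter, Finset.mem_powersetCard, ← hp0e]
    refine ⟨⟨?_, Finset.card_pair (fun h => hne h.symm)⟩, ?_⟩
    · exact Finset.insert_subset hz1 (Finset.singleton_subset_iff.2 hz2)
    · show insert x {p0.1, p0.2} ∉ H
      have : (insert x {p0.1, p0.2} : Finset (Fin n)) = {p0.1, x, p0.2} :=
        Finset.insert_comm x p0.1 {p0.2}
      rw [this]
      exact hmiss
  omega

lemma xbadCard (H : Finset (Finset (Fin n))) (Z : Finset (Fin n)) (x : Fin n)
    (hq : 0 < Z.card)
    (hx : 10000 * ((Z.powersetCard 2).filter (fun p => insert x p ∉ H)).card ≤ Z.card.choose 2) :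
    25 * (xbad H Z x).card ≤ Z.card := by
  classical
  have h1 : (xbad H Z x).card * Z.card ≤ ∑ b ∈ Z, 100 * (Miss H Z x b).card := by
    exact thresholdCard Z (fun b => 100 * (Miss H Z x b).card) Z.card
  rw [← Finset.mul_sum] at h1
  have h2 := missSum H Z x
  have h3 : Z.card.choose 2 * 2 ≤ Z.card * Z.card := by
    rw [Nat.choose_two_right]
    calc Z.card * (Z.card - 1) / 2 * 2 ≤ Z.card * (Z.card - 1) := Nat.div_mul_le_self _ 2
    _ ≤ Z.card * Z.card := Nat.mul_le_mul_left _ (by omega)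
  -- xbadcard * q * 25 ≤ 2500 * Σ Miss... chain:
  -- card * q ≤ 100 Σ ≤ 400 pairs; 10⁴ pairs ≤ C; 2C ≤ q²
  -- so card * q * 50 = 50*(card*q) ≤ 50*400*pairs = 2*10⁴ pairs ≤ 2C ≤ q*q
  have h4 : 50 * ((xbad H Z x).card * Z.card) ≤ Z.card * Z.card := by
    calc 50 * ((xbad H Z x).card * Z.card) ≤ 50 * (100 * ∑ b ∈ Z, (Miss H Z x b).card) :=
          Nat.mul_le_mul_left _ h1
    _ ≤ 50 * (100 * (4 * ((Z.powersetCard 2).filter (fun p => insert x p ∉ H)).card)) := by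
          apply Nat.mul_le_mul_left
          exact Nat.mul_le_mul_left _ h2
    _ = 2 * (10000 * ((Z.powersetCard 2).filter (fun p => insert x p ∉ H)).card) := by ring
    _ ≤ 2 * Z.card.choose 2 := Nat.mul_le_mul_left _ hx
    _ = Z.card.choose 2 * 2 := by ring
    _ ≤ Z.card * Z.card := h3
  have h5 : 50 * (xbad H Z x).card * Z.card ≤ Z.card * Z.card := by
    calc 50 * (xbad H Z x).card * Z.card = 50 * ((xbad H Z x).card * Z.card) := by ring
    _ ≤ Z.card * Z.card := h4
  have h6 : 50 * (xbad H Z x).card ≤ Z.card := Nat.le_of_mul_le_mul_right h5 hq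
  omega

lemma zbadCard (H : Finset (Finset (Fin n))) (X Z : Finset (Fin n)) (z : Fin n)
    (hq : 0 < Z.card)
    (hz : 10000 * (((X ×ˢ (Z.erase z)).filter
        (fun q => ({z, q.1, q.2} : Finset (Fin n)) ∉ H)).card) ≤ X.card * Z.card) :
    2500 * (zbad H X Z z).card ≤ X.card := by
  classical
  have h0 : (((X ×ˢ (Z.erase z)).filter
      (fun q => ({z, q.1, q.2} : Finset (Fin n)) ∉ H)).card) = ∑ x ∈ X, (Miss H Z x z).card := by
    rw [cardFilterProduct X (Z.erase z) (fun x z' => ({z, x, z'} : Finset (Fin n)) ∉ H)]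
    rfl
  have h1 : (zbad H X Z z).card * Z.card ≤ ∑ x ∈ X, 4 * (Miss H Z x z).card :=
    thresholdCard X (fun x => 4 * (Miss H Z x z).card) Z.card
  rw [← Finset.mul_sum] at h1
  have h4 : 2500 * ((zbad H X Z z).card * Z.card) ≤ X.card * Z.card := by
    calc 2500 * ((zbad H X Z z).card * Z.card) ≤ 2500 * (4 * ∑ x ∈ X, (Miss H Z x z).card) :=
          Nat.mul_le_mul_left _ h1
    _ = 10000 * ∑ x ∈ X, (Miss H Z x z).card := by ring
    _ = 10000 * (((X ×ˢ (Z.erase z)).filter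
          (fun q => ({z, q.1, q.2} : Finset (Fin n)) ∉ H)).card) := by rw [h0]
    _ ≤ X.card * Z.card := hz
  have h5 : 2500 * (zbad H X Z z).card * Z.card ≤ X.card * Z.card := by
    calc 2500 * (zbad H X Z z).card * Z.card = 2500 * ((zbad H X Z z).card * Z.card) := by ring
    _ ≤ X.card * Z.card := h4
  exact Nat.le_of_mul_le_mul_right h5 hq

lemma missAdj {H : Finset (Finset (Fin n))} {Z : Finset (Fin n)} {x z z' : Fin n}
    (hz' : z' ∈ Z) (hne : z' ≠ z) (h : z' ∉ Miss H Z x z) :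
    ({z, x, z'} : Finset (Fin n)) ∈ H := by
  by_contra hmem
  exact h (Finset.mem_filter.2 ⟨Finset.mem_erase.2 ⟨hne, hz'⟩, hmem⟩)

lemma tri12 {γ : Type*} [DecidableEq γ] (a b c : γ) : ({a, b, c} : Finset γ) = {b, a, c} :=
  Finset.insert_comm a b {c}

lemma tri23 {γ : Type*} [DecidableEq γ] (a b c : γ) : ({a, b, c} : Finset γ) = {a, c, b} := by
  rw [Finset.pair_comm b c]

/-- The core combinatorial construction. -/
lemma corePath (H : Finset (Finset (Fin n))) (X Z : Finset (Fin n))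
    (hd : Disjoint X Z)
    (hm : 250001 ≤ X.card)
    (hq3 : Z.card = 3 * (X.card - 1))
    (hX : ∀ x ∈ X, 10000 * ((Z.powersetCard 2).filter (fun p => insert x p ∉ H)).card
      ≤ Z.card.choose 2)
    (hZ : ∀ z ∈ Z, 10000 * (((X ×ˢ (Z.erase z)).filter
        (fun q => ({z, q.1, q.2} : Finset (Fin n)) ∉ H)).card) ≤ X.card * Z.card)
    (x₀ x₁ : Fin n) (hx0 : x₀ ∈ X) (hx1 : x₁ ∈ X) (hne : x₀ ≠ x₁) :
    ∃ u zf : ℕ → Fin n,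
      Set.InjOn u (Set.Iio X.card) ∧ (∀ i < X.card, u i ∈ X) ∧
      Set.InjOn zf (Set.Iio (3 * (X.card - 1))) ∧ (∀ i < 3 * (X.card - 1), zf i ∈ Z) ∧
      (∀ j < X.card - 1, ({u j, zf (3 * j), zf (3 * j + 1)} : Finset (Fin n)) ∈ H) ∧
      (∀ j < X.card - 1, ({zf (3 * j + 1), zf (3 * j + 2), u (j + 1)} : Finset (Fin n)) ∈ H) ∧
      u 0 = x₀ ∧ u (X.card - 1) = x₁ := by
  classical
  have hnn : Nonempty (Fin n) := ⟨x₀⟩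
  set m := X.card with hmdef
  set q := Z.card with hqdef
  have hq0 : 0 < q := by omega
  have hxb : ∀ x ∈ X, 25 * (xbad H Z x).card ≤ q := fun x hx' => xbadCard H Z x hq0 (hX x hx')
  have hzb : ∀ z ∈ Z, 2500 * (zbad H X Z z).card ≤ m :=
    fun z hz' => zbadCard H X Z z hq0 (hZ z hz')
  -- enumeration of X
  obtain ⟨u, huinj, huX, hu0, hu1⟩ := enumFinsetEnds X hx0 hx1 hne
  -- choice of the middle vertices b j
  have hbA : ∀ j < m - 1, m - 1 ≤ (Z \ (xbad H Z (u j) ∪ xbad H Z (u (j+1)))).card := by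
    intro j hj
    have h1 := hxb (u j) (huX j (by omega))
    have h2 := hxb (u (j+1)) (huX (j+1) (by omega))
    have h3 := Finset.le_card_sdiff (xbad H Z (u j) ∪ xbad H Z (u (j+1))) Z
    have h4 := Finset.card_union_le (xbad H Z (u j)) (xbad H Z (u (j+1)))
    omega
  obtain ⟨b, hbinj, hbmem⟩ := greedySDR (m-1) _ hbA
  have hbZ : ∀ j < m - 1, b j ∈ Z := fun j hj => (Finset.mem_sdiff.1 (hbmem j hj)).1
  have hxgood : ∀ x, x ∈ X → ∀ w, w ∈ Z → w ∉ xbad H Z x →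
      100 * (Miss H Z x w).card + 1 ≤ q := by
    intro x hx' w hw hnw
    rw [xbad, Finset.mem_filter] at hnw
    push_neg at hnw
    have := hnw hw
    omega
  have hbgood : ∀ j < m - 1, 100 * (Miss H Z (u j) (b j)).card + 1 ≤ q
      ∧ 100 * (Miss H Z (u (j+1)) (b j)).card + 1 ≤ q := by
    intro j hj
    have h1 := (Finset.mem_sdiff.1 (hbmem j hj)).2
    rw [Finset.mem_union] at h1
    push_neg at h1
    exact ⟨hxgood (u j) (huX j (by omega)) (b j) (hbZ j hj) h1.1,
      hxgood (u (j+1)) (huX (j+1) (by omega)) (b j) (hbZ j hj) h1.2⟩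
  set B := (Finset.range (m-1)).image b with hBdef
  have hBcard : B.card = m - 1 := by
    rw [hBdef, Finset.card_image_of_injOn (by rw [Finset.coe_range]; exact hbinj),
      Finset.card_range]
  have hBZ : B ⊆ Z := by
    intro w hw
    obtain ⟨j, hj, hjw⟩ := Finset.mem_image.1 hw
    exact hjw ▸ hbZ j (Finset.mem_range.1 hj)
  -- nonadjacency counts
  set fL : Fin n → ℕ := fun z =>
    ((Finset.range (m-1)).filter (fun j => ({b j, u j, z} : Finset (Fin n)) ∉ H)).card with hfL
  set fR : Fin n → ℕ := fun z =>
    ((Finset.range (m-1)).filter (fun j => ({b j, u (j+1), z} : Finset (Fin n)) ∉ H)).card with hfR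
  have hslotsub : ∀ (x : Fin n), ∀ j < m - 1,
      (Z.filter (fun z => ({b j, x, z} : Finset (Fin n)) ∉ H))
        ⊆ insert (b j) (Miss H Z x (b j)) := by
    intro x j hj z hz
    rw [Finset.mem_filter] at hz
    by_cases hzb' : z = b j
    · exact hzb' ▸ Finset.mem_insert_self _ _
    · exact Finset.mem_insert_of_mem
        (Finset.mem_filter.2 ⟨Finset.mem_erase.2 ⟨hzb', hz.1⟩, hz.2⟩)
  have hfsum : 100 * (∑ z ∈ Z, (fL z + fR z)) ≤ (m-1) * (2*q + 198) := by
    rw [Finset.sum_add_distrib]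
    have hLs : ∑ z ∈ Z, fL z = ∑ j ∈ Finset.range (m-1),
        (Z.filter (fun z => ({b j, u j, z} : Finset (Fin n)) ∉ H)).card :=
      sumCardSwap Z (m-1) (fun z j => ({b j, u j, z} : Finset (Fin n)) ∉ H)
    have hRs : ∑ z ∈ Z, fR z = ∑ j ∈ Finset.range (m-1),
        (Z.filter (fun z => ({b j, u (j+1), z} : Finset (Fin n)) ∉ H)).card :=
      sumCardSwap Z (m-1) (fun z j => ({b j, u (j+1), z} : Finset (Fin n)) ∉ H)
    have hLb : ∀ j ∈ Finset.range (m-1),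
        100 * (Z.filter (fun z => ({b j, u j, z} : Finset (Fin n)) ∉ H)).card ≤ q + 99 := by
      intro j hj
      rw [Finset.mem_range] at hj
      have h1 := Finset.card_le_card (hslotsub (u j) j hj)
      have h2 := Finset.card_insert_le (b j) (Miss H Z (u j) (b j))
      have h3 := (hbgood j hj).1
      omega
    have hRb : ∀ j ∈ Finset.range (m-1),
        100 * (Z.filter (fun z => ({b j, u (j+1), z} : Finset (Fin n)) ∉ H)).card ≤ q + 99 := by
      intro j hj
      rw [Finset.mem_range] at hj
      have h1 := Finset.card_le_card (hslotsub (u (j+1)) j hj)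
      have h2 := Finset.card_insert_le (b j) (Miss H Z (u (j+1)) (b j))
      have h3 := (hbgood j hj).2
      omega
    have hL : 100 * ∑ z ∈ Z, fL z ≤ (m-1) * (q + 99) := by
      rw [hLs, Finset.mul_sum]
      calc ∑ j ∈ Finset.range (m-1), 100 *
            (Z.filter (fun z => ({b j, u j, z} : Finset (Fin n)) ∉ H)).card
          ≤ ∑ _j ∈ Finset.range (m-1), (q + 99) := Finset.sum_le_sum hLb
        _ = (m-1) * (q + 99) := by rw [Finset.sum_const, Finset.card_range, smul_eq_mul]
    have hR : 100 * ∑ z ∈ Z, fR z ≤ (m-1) * (q + 99) := by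
      rw [hRs, Finset.mul_sum]
      calc ∑ j ∈ Finset.range (m-1), 100 *
            (Z.filter (fun z => ({b j, u (j+1), z} : Finset (Fin n)) ∉ H)).card
          ≤ ∑ _j ∈ Finset.range (m-1), (q + 99) := Finset.sum_le_sum hRb
        _ = (m-1) * (q + 99) := by rw [Finset.sum_const, Finset.card_range, smul_eq_mul]
    have : (m-1) * (2*q + 198) = (m-1) * (q + 99) + (m-1) * (q + 99) := by ring
    omega
  -- the set of bad z
  set T := (Z \ B).filter (fun z => (m-1) ≤ 4 * (fL z + fR z)) with hTdef
  set t := T.card with htdef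
  have ht24 : 100 * t ≤ 24 * (m-1) + 792 := by
    have h1 : t * (m-1) ≤ ∑ z ∈ Z \ B, (4 * (fL z + fR z)) := by
      have := thresholdCard (Z \ B) (fun z => 4 * (fL z + fR z)) (m-1)
      convert this using 2
    have h2 : ∑ z ∈ Z \ B, (4 * (fL z + fR z)) ≤ 4 * ∑ z ∈ Z, (fL z + fR z) := by
      rw [← Finset.mul_sum]
      exact Nat.mul_le_mul_left _ (Finset.sum_le_sum_of_subset (Finset.sdiff_subset))
    have h3 : 100 * (t * (m-1)) ≤ (24 * (m-1) + 792) * (m-1) := by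
      calc 100 * (t * (m-1)) ≤ 100 * (4 * ∑ z ∈ Z, (fL z + fR z)) := by
            apply Nat.mul_le_mul_left; omega
      _ = 4 * (100 * ∑ z ∈ Z, (fL z + fR z)) := by ring
      _ ≤ 4 * ((m-1) * (2*q + 198)) := Nat.mul_le_mul_left _ hfsum
      _ = (24 * (m-1) + 792) * (m-1) := by rw [hq3]; ring
    have h4 : (100 * t) * (m-1) ≤ (24 * (m-1) + 792) * (m-1) := by
      calc (100 * t) * (m-1) = 100 * (t * (m-1)) := by ring
      _ ≤ (24 * (m-1) + 792) * (m-1) := h3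
    exact Nat.le_of_mul_le_mul_right h4 (by omega)
  have hTZB : T ⊆ Z \ B := Finset.filter_subset _ _
  -- enumerate T
  obtain ⟨zT, hzTinj, hzTmem⟩ := enumFinset T x₀
  have hzTZ : ∀ i < t, zT i ∈ Z := fun i hi => (Finset.mem_sdiff.1 (hTZB (hzTmem i hi))).1
  have hzTB : ∀ i < t, zT i ∉ B := fun i hi => (Finset.mem_sdiff.1 (hTZB (hzTmem i hi))).2
  -- hosts
  have hhA : ∀ i < t, t ≤ ((Finset.range (m-1)).filter
      (fun j => u j ∉ zbad H X Z (zT i))).card := by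
    intro i hi
    have h1 : ((Finset.range (m-1)).filter (fun j => u j ∈ zbad H X Z (zT i))).card
        ≤ (zbad H X Z (zT i)).card := by
      apply Finset.card_le_card_of_injOn (fun j => u j)
      · intro j hj
        exact (Finset.mem_filter.1 hj).2
      · intro j1 hj1 j2 hj2 heq
        have hr1 := Finset.mem_range.1 (Finset.mem_filter.1 hj1).1
        have hr2 := Finset.mem_range.1 (Finset.mem_filter.1 hj2).1
        exact huinj (by simp only [Set.mem_Iio]; omega) (by simp only [Set.mem_Iio]; omega) heq
    have h2 := Finset.card_filter_add_card_filter_not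
      (s := Finset.range (m-1)) (p := fun j => u j ∈ zbad H X Z (zT i))
    have h3 := hzb (zT i) (hzTZ i hi)
    rw [Finset.card_range] at h2
    omega
  obtain ⟨h, hhinj, hhmem⟩ := greedySDR t _ hhA
  have hhlt : ∀ i < t, h i < m - 1 :=
    fun i hi => Finset.mem_range.1 (Finset.mem_filter.1 (hhmem i hi)).1
  have hhgood : ∀ i < t, 4 * (Miss H Z (u (h i)) (zT i)).card + 1 ≤ q := by
    intro i hi
    have h1 := (Finset.mem_filter.1 (hhmem i hi)).2
    rw [zbad, Finset.mem_filter] at h1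
    push_neg at h1
    have := h1 (huX (h i) (by have := hhlt i hi; omega))
    omega
  -- new b's for hosted segments
  have hnbA : ∀ i < t, t ≤ ((((Z \ B) \ T) \ Miss H Z (u (h i)) (zT i))
      \ Miss H Z (u (h i + 1)) (b (h i))).card := by
    intro i hi
    have hbase : ((Z \ B) \ T).card = q - (m-1) - t := by
      rw [Finset.card_sdiff_of_subset hTZB, Finset.card_sdiff_of_subset hBZ, hBcard]
    have h1 := Finset.le_card_sdiff (Miss H Z (u (h i)) (zT i)) ((Z \ B) \ T)
    have h2 := Finset.le_card_sdiff (Miss H Z (u (h i + 1)) (b (h i)))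
      (((Z \ B) \ T) \ Miss H Z (u (h i)) (zT i))
    have h3 := hhgood i hi
    have h4 := (hbgood (h i) (hhlt i hi)).2
    omega
  obtain ⟨nb, hnbinj, hnbmem⟩ := greedySDR t _ hnbA
  have hnbZBT : ∀ i < t, nb i ∈ (Z \ B) \ T := by
    intro i hi
    have := hnbmem i hi
    exact Finset.mem_sdiff.1 (Finset.mem_sdiff.1 this).1 |>.1
  have hnbZ : ∀ i < t, nb i ∈ Z := fun i hi =>
    (Finset.mem_sdiff.1 (Finset.mem_sdiff.1 (hnbZBT i hi)).1).1
  have hnbB : ∀ i < t, nb i ∉ B := fun i hi =>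
    (Finset.mem_sdiff.1 (Finset.mem_sdiff.1 (hnbZBT i hi)).1).2
  have hnbT : ∀ i < t, nb i ∉ T := fun i hi => (Finset.mem_sdiff.1 (hnbZBT i hi)).2
  have hnbMiss1 : ∀ i < t, nb i ∉ Miss H Z (u (h i)) (zT i) := by
    intro i hi
    have := hnbmem i hi
    exact (Finset.mem_sdiff.1 (Finset.mem_sdiff.1 this).1).2
  have hnbMiss2 : ∀ i < t, nb i ∉ Miss H Z (u (h i + 1)) (b (h i)) := by
    intro i hi
    exact (Finset.mem_sdiff.1 (hnbmem i hi)).2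
  -- edges for hosted segments
  have hedge1 : ∀ i < t, ({zT i, u (h i), nb i} : Finset (Fin n)) ∈ H := by
    intro i hi
    apply missAdj (hnbZ i hi) _ (hnbMiss1 i hi)
    intro hcon
    exact (hnbT i hi) (hcon ▸ hzTmem i hi)
  have hedge2 : ∀ i < t, ({b (h i), u (h i + 1), nb i} : Finset (Fin n)) ∈ H := by
    intro i hi
    apply missAdj (hnbZ i hi) _ (hnbMiss2 i hi)
    intro hcon
    exact (hnbB i hi) (hcon ▸ Finset.mem_image_of_mem b (Finset.mem_range.2 (hhlt i hi)))
  -- sets for the matching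
  set NB := (Finset.range t).image nb with hNBdef
  have hNBcard : NB.card = t := by
    rw [hNBdef, Finset.card_image_of_injOn (by rw [Finset.coe_range]; exact hnbinj),
      Finset.card_range]
  have hNBsub : NB ⊆ (Z \ B) \ T := by
    intro w hw
    obtain ⟨i, hi, hiw⟩ := Finset.mem_image.1 hw
    exact hiw ▸ hnbZBT i (Finset.mem_range.1 hi)
  set Z2 := ((Z \ B) \ T) \ NB with hZ2def
  have hZ2card : Z2.card = q - (m-1) - t - t := by
    rw [hZ2def, Finset.card_sdiff_of_subset hNBsub, Finset.card_sdiff_of_subset hTZB, Finset.card_sdiff_of_subset hBZ,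
      hBcard, hNBcard]
  set hosts := (Finset.range t).image h with hhostsdef
  have hhostscard : hosts.card = t := by
    rw [hhostsdef, Finset.card_image_of_injOn (by rw [Finset.coe_range]; exact hhinj),
      Finset.card_range]
  have hhostssub : hosts ⊆ Finset.range (m-1) := by
    intro w hw
    obtain ⟨i, hi, hiw⟩ := Finset.mem_image.1 hw
    exact hiw ▸ Finset.mem_range.2 (hhlt i (Finset.mem_range.1 hi))
  set NH := Finset.range (m-1) \ hosts with hNHdef
  have hNHcard : NH.card = (m-1) - t := by
    rw [hNHdef, Finset.card_sdiff_of_subset hhostssub, Finset.card_range, hhostscard]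
  set S := NH ×ˢ (Finset.univ : Finset Bool) with hSdef
  have hScard : S.card = ((m-1) - t) * 2 := by
    rw [hSdef, Finset.card_product, hNHcard]
    simp
  have htm : t ≤ m - 1 := by omega
  have hqm : q = 3 * (m-1) := hq3
  have hNS : Z2.card = S.card := by
    rw [hZ2card, hScard]
    omega
  -- the bipartite sets for Hall's theorem
  set tset : {p : ℕ × Bool // p ∈ S} → Finset (Fin n) := fun s =>
    Z2.filter (fun z =>
      ({b s.1.1, u (if s.1.2 then s.1.1 else s.1.1 + 1), z} : Finset (Fin n)) ∈ H) with htset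
  have hSNH : ∀ s : {p : ℕ × Bool // p ∈ S}, s.1.1 ∈ NH ∧ s.1.1 < m - 1 := by
    intro s
    have := Finset.mem_product.1 s.2
    exact ⟨this.1, Finset.mem_range.1 (Finset.mem_sdiff.1 this.1).1⟩
  have htsetdeg : ∀ s : {p : ℕ × Bool // p ∈ S},
      100 * Z2.card ≤ 100 * (tset s).card + q + 99 := by
    intro s
    obtain ⟨hsNH, hslt⟩ := hSNH s
    have hxg : 100 * (Miss H Z (u (if s.1.2 then s.1.1 else s.1.1 + 1)) (b s.1.1)).card + 1
        ≤ q := by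
      cases hcb : s.1.2
      · simp only [hcb, if_false, Bool.false_eq_true, reduceIte]
        exact (hbgood s.1.1 hslt).2
      · simp only [hcb, if_true]
        exact (hbgood s.1.1 hslt).1
    have hcompl : Z2.filter (fun z =>
        ¬ (({b s.1.1, u (if s.1.2 then s.1.1 else s.1.1 + 1), z} : Finset (Fin n)) ∈ H))
        ⊆ insert (b s.1.1) (Miss H Z (u (if s.1.2 then s.1.1 else s.1.1 + 1)) (b s.1.1)) := by
      refine Finset.Subset.trans ?_ (hslotsub (u (if s.1.2 then s.1.1 else s.1.1 + 1)) s.1.1 hslt)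
      apply Finset.filter_subset_filter
      intro z hz
      exact (Finset.mem_sdiff.1 (Finset.mem_sdiff.1 (Finset.mem_sdiff.1 hz).1).1).1
    have hsplit := Finset.card_filter_add_card_filter_not (s := Z2)
      (p := fun z => ({b s.1.1, u (if s.1.2 then s.1.1 else s.1.1 + 1), z} : Finset (Fin n)) ∈ H)
    have h1 := Finset.card_le_card hcompl
    have h2 := Finset.card_insert_le (b s.1.1)
      (Miss H Z (u (if s.1.2 then s.1.1 else s.1.1 + 1)) (b s.1.1))
    have h3 : (tset s).card = (Z2.filter (fun z =>
        ({b s.1.1, u (if s.1.2 then s.1.1 else s.1.1 + 1), z} : Finset (Fin n)) ∈ H)).card := rfl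
    omega
  have hzdeg : ∀ z ∈ Z2, ∀ (sf : Finset {p : ℕ × Bool // p ∈ S}),
      (∀ i ∈ sf, z ∉ tset i) → sf.card ≤ fL z + fR z := by
    intro z hz sf hnon
    have step1 : sf.card ≤ (S.filter (fun p =>
        ({b p.1, u (if p.2 then p.1 else p.1 + 1), z} : Finset (Fin n)) ∉ H)).card := by
      apply Finset.card_le_card_of_injOn (fun i => i.1)
      · intro i hi
        rw [Finset.mem_coe, Finset.mem_filter]
        refine ⟨i.2, ?_⟩
        intro hadj
        exact (hnon i hi) (Finset.mem_filter.2 ⟨hz, hadj⟩)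
      · intro i1 _ i2 _ he
        exact Subtype.ext he
    have step2 : (S.filter (fun p =>
        ({b p.1, u (if p.2 then p.1 else p.1 + 1), z} : Finset (Fin n)) ∉ H))
        ⊆ ((Finset.range (m-1)).filter
            (fun j => ({b j, u j, z} : Finset (Fin n)) ∉ H)) ×ˢ ({true} : Finset Bool)
          ∪ ((Finset.range (m-1)).filter
            (fun j => ({b j, u (j+1), z} : Finset (Fin n)) ∉ H)) ×ˢ ({false} : Finset Bool) := by
      intro p hp
      rw [Finset.mem_filter] at hp
      have hpS := Finset.mem_product.1 hp.1
      have hpr : p.1 ∈ Finset.range (m-1) := (Finset.mem_sdiff.1 hpS.1).1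
      cases hcb : p.2
      · apply Finset.mem_union_right
        rw [Finset.mem_product]
        refine ⟨Finset.mem_filter.2 ⟨hpr, ?_⟩, by simp [hcb]⟩
        have := hp.2
        rw [hcb] at this
        simpa using this
      · apply Finset.mem_union_left
        rw [Finset.mem_product]
        refine ⟨Finset.mem_filter.2 ⟨hpr, ?_⟩, by simp [hcb]⟩
        have := hp.2
        rw [hcb] at this
        simpa using this
    have step3 := Finset.card_le_card step2
    have step4 := Finset.card_union_le
      (((Finset.range (m-1)).filter
          (fun j => ({b j, u j, z} : Finset (Fin n)) ∉ H)) ×ˢ ({true} : Finset Bool))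
      (((Finset.range (m-1)).filter
          (fun j => ({b j, u (j+1), z} : Finset (Fin n)) ∉ H)) ×ˢ ({false} : Finset Bool))
    simp only [Finset.card_product, Finset.card_singleton, mul_one] at step4
    have hfLz : fL z = ((Finset.range (m-1)).filter
        (fun j => ({b j, u j, z} : Finset (Fin n)) ∉ H)).card := rfl
    have hfRz : fR z = ((Finset.range (m-1)).filter
        (fun j => ({b j, u (j+1), z} : Finset (Fin n)) ∉ H)).card := rfl
    omega
  have hHall : ∀ sf : Finset {p : ℕ × Bool // p ∈ S}, sf.card ≤ (sf.biUnion tset).card := by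
    intro sf
    by_contra hcon
    push_neg at hcon
    have hne' : sf.Nonempty := by
      rw [← Finset.card_pos]; omega
    obtain ⟨s₀, hs₀⟩ := hne'
    have h1 : (tset s₀).card ≤ (sf.biUnion tset).card :=
      Finset.card_le_card (Finset.subset_biUnion_of_mem tset hs₀)
    have hbusub : sf.biUnion tset ⊆ Z2 :=
      Finset.biUnion_subset.2 (fun i _ => Finset.filter_subset _ _)
    have hsfcard : sf.card ≤ S.card := by
      simpa [Fintype.card_coe] using Finset.card_le_univ sf
    have hW : (Z2 \ sf.biUnion tset).Nonempty := by
      rw [← Finset.card_pos, Finset.card_sdiff_of_subset hbusub]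
      omega
    obtain ⟨z, hzW⟩ := hW
    rw [Finset.mem_sdiff] at hzW
    have hnon : ∀ i ∈ sf, z ∉ tset i :=
      fun i hi hmem => hzW.2 (Finset.mem_biUnion.2 ⟨i, hi, hmem⟩)
    have h2 := hzdeg z hzW.1 sf hnon
    have h3 : 4 * (fL z + fR z) ≤ m - 2 := by
      have hz1 : z ∈ Z \ B := (Finset.mem_sdiff.1 (Finset.mem_sdiff.1 hzW.1).1).1
      have hz2 : z ∉ T := (Finset.mem_sdiff.1 (Finset.mem_sdiff.1 hzW.1).1).2
      rw [hTdef, Finset.mem_filter] at hz2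
      push_neg at hz2
      have := hz2 hz1
      omega
    have h4 := htsetdeg s₀
    omega
  obtain ⟨fm, hfminj, hfmmem⟩ := (Finset.all_card_le_biUnion_card_iff_exists_injective tset).1 hHall
  have hfmZ2 : ∀ s, fm s ∈ Z2 := fun s => (Finset.mem_filter.1 (hfmmem s)).1
  -- assemble
  set hostedP : ℕ → Prop := fun j => ∃ i, i < t ∧ h i = j with hhostedP
  have hjS : ∀ j, j < m - 1 → ¬ hostedP j → ∀ s : Bool, (j, s) ∈ S := by
    intro j hj hnh s
    rw [hSdef, Finset.mem_product]
    refine ⟨Finset.mem_sdiff.2 ⟨Finset.mem_range.2 hj, ?_⟩, Finset.mem_univ s⟩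
    intro hmem
    obtain ⟨i, hi, hij⟩ := Finset.mem_image.1 hmem
    exact hnh ⟨i, Finset.mem_range.1 hi, hij⟩
  set trip : ℕ → (Fin n × Fin n × Fin n) := fun j =>
    if hj : hostedP j then (zT (Classical.choose hj), nb (Classical.choose hj), b j)
    else if hS2 : ((j, true) ∈ S ∧ (j, false) ∈ S) then
      (fm ⟨(j,true), hS2.1⟩, b j, fm ⟨(j,false), hS2.2⟩)
    else (x₀, x₀, x₀) with htrip
  have htripH : ∀ j, (hj : hostedP j) →
      trip j = (zT (Classical.choose hj), nb (Classical.choose hj), b j) := by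
    intro j hj
    simp only [htrip]
    rw [dif_pos hj]
  have htripN : ∀ j, (hj : ¬ hostedP j) → (hS2 : ((j, true) ∈ S ∧ (j, false) ∈ S)) →
      trip j = (fm ⟨(j,true), hS2.1⟩, b j, fm ⟨(j,false), hS2.2⟩) := by
    intro j hj hS2
    simp only [htrip]
    rw [dif_neg hj, dif_pos hS2]
  have hchoose : ∀ j, (hj : hostedP j) →
      Classical.choose hj < t ∧ h (Classical.choose hj) = j := by
    intro j hj
    exact ⟨(Classical.choose_spec hj).1, (Classical.choose_spec hj).2⟩
  -- disjointness facts
  have hDBT : ∀ w, w ∈ B → w ∈ T → False := fun w hB hT => (Finset.mem_sdiff.1 (hTZB hT)).2 hB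
  have hDBNB : ∀ w, w ∈ B → w ∈ NB → False := fun w hB hNB =>
    (Finset.mem_sdiff.1 (Finset.mem_sdiff.1 (hNBsub hNB)).1).2 hB
  have hDTNB : ∀ w, w ∈ T → w ∈ NB → False := fun w hT hNB =>
    (Finset.mem_sdiff.1 (hNBsub hNB)).2 hT
  have hDBZ2 : ∀ w, w ∈ B → w ∈ Z2 → False := fun w hB hZ2 =>
    (Finset.mem_sdiff.1 (Finset.mem_sdiff.1 (Finset.mem_sdiff.1 hZ2).1).1).2 hB
  have hDTZ2 : ∀ w, w ∈ T → w ∈ Z2 → False := fun w hT hZ2 =>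
    (Finset.mem_sdiff.1 (Finset.mem_sdiff.1 hZ2).1).2 hT
  have hDNBZ2 : ∀ w, w ∈ NB → w ∈ Z2 → False := fun w hNB hZ2 =>
    (Finset.mem_sdiff.1 hZ2).2 hNB
  have hbB : ∀ j, j < m - 1 → b j ∈ B :=
    fun j hj => Finset.mem_image_of_mem b (Finset.mem_range.2 hj)
  have hZ2Z : ∀ w, w ∈ Z2 → w ∈ Z := fun w hw =>
    (Finset.mem_sdiff.1 (Finset.mem_sdiff.1 (Finset.mem_sdiff.1 hw).1).1).1
  -- the key injectivity of the component map
  have keyinj : ∀ j1, j1 < m - 1 → ∀ j2, j2 < m - 1 → ∀ c1, c1 < 3 → ∀ c2, c2 < 3 →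
      (if c1 = 0 then (trip j1).1 else if c1 = 1 then (trip j1).2.1 else (trip j1).2.2)
        = (if c2 = 0 then (trip j2).1 else if c2 = 1 then (trip j2).2.1 else (trip j2).2.2) →
      j1 = j2 ∧ c1 = c2 := by
    intro j1 hj1 j2 hj2 c1 hc1 c2 hc2 heq
    by_cases hA : hostedP j1 <;> by_cases hB2 : hostedP j2
    · -- both hosted
      obtain ⟨hi1, hh1⟩ := hchoose j1 hA
      obtain ⟨hi2, hh2⟩ := hchoose j2 hB2
      have hv1 : (trip j1).1 = zT (Classical.choose hA) := by rw [htripH j1 hA]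
      have hv2 : (trip j1).2.1 = nb (Classical.choose hA) := by rw [htripH j1 hA]
      have hv3 : (trip j1).2.2 = b j1 := by rw [htripH j1 hA]
      have hw1 : (trip j2).1 = zT (Classical.choose hB2) := by rw [htripH j2 hB2]
      have hw2 : (trip j2).2.1 = nb (Classical.choose hB2) := by rw [htripH j2 hB2]
      have hw3 : (trip j2).2.2 = b j2 := by rw [htripH j2 hB2]
      interval_cases c1 <;> interval_cases c2 <;>
        ((try norm_num at heq); (try simp only [hv1, hv2, hv3, hw1, hw2, hw3] at heq))
      · refine ⟨?_, rfl⟩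
        have hii := hzTinj (show Classical.choose hA ∈ Set.Iio t from hi1)
          (show Classical.choose hB2 ∈ Set.Iio t from hi2) heq
        rw [← hh1, ← hh2, hii]
      · exact ((hnbT _ hi2) (by rw [← heq]; exact hzTmem _ hi1)).elim
      · exact ((hzTB _ hi1) (by rw [heq]; exact hbB j2 hj2)).elim
      · exact ((hnbT _ hi1) (by rw [heq]; exact hzTmem _ hi2)).elim
      · refine ⟨?_, rfl⟩
        have hii := hnbinj (show Classical.choose hA ∈ Set.Iio t from hi1)
          (show Classical.choose hB2 ∈ Set.Iio t from hi2) heq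
        rw [← hh1, ← hh2, hii]
      · exact ((hnbB _ hi1) (by rw [heq]; exact hbB j2 hj2)).elim
      · exact ((hzTB _ hi2) (by rw [← heq]; exact hbB j1 hj1)).elim
      · exact ((hnbB _ hi2) (by rw [← heq]; exact hbB j1 hj1)).elim
      · exact ⟨hbinj (show j1 ∈ Set.Iio (m-1) from hj1) (show j2 ∈ Set.Iio (m-1) from hj2)
          heq, rfl⟩
    · -- j1 hosted, j2 not
      have hS2 : ((j2, true) ∈ S ∧ (j2, false) ∈ S) := ⟨hjS j2 hj2 hB2 true, hjS j2 hj2 hB2 false⟩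
      obtain ⟨hi1, hh1⟩ := hchoose j1 hA
      have hv1 : (trip j1).1 = zT (Classical.choose hA) := by rw [htripH j1 hA]
      have hv2 : (trip j1).2.1 = nb (Classical.choose hA) := by rw [htripH j1 hA]
      have hv3 : (trip j1).2.2 = b j1 := by rw [htripH j1 hA]
      have hw1 : (trip j2).1 = fm ⟨(j2,true), hS2.1⟩ := by rw [htripN j2 hB2 hS2]
      have hw2 : (trip j2).2.1 = b j2 := by rw [htripN j2 hB2 hS2]
      have hw3 : (trip j2).2.2 = fm ⟨(j2,false), hS2.2⟩ := by rw [htripN j2 hB2 hS2]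
      exfalso
      interval_cases c1 <;> interval_cases c2 <;>
        ((try norm_num at heq); (try simp only [hv1, hv2, hv3, hw1, hw2, hw3] at heq))
      · exact hDTZ2 _ (hzTmem _ hi1) (by rw [heq]; exact hfmZ2 _)
      · exact (hzTB _ hi1) (by rw [heq]; exact hbB j2 hj2)
      · exact hDTZ2 _ (hzTmem _ hi1) (by rw [heq]; exact hfmZ2 _)
      · exact hDNBZ2 _ (Finset.mem_image_of_mem nb (Finset.mem_range.2 hi1))
          (by rw [heq]; exact hfmZ2 _)
      · exact (hnbB _ hi1) (by rw [heq]; exact hbB j2 hj2)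
      · exact hDNBZ2 _ (Finset.mem_image_of_mem nb (Finset.mem_range.2 hi1))
          (by rw [heq]; exact hfmZ2 _)
      · exact hDBZ2 _ (hbB j1 hj1) (by rw [heq]; exact hfmZ2 _)
      · have hjj := hbinj (show j1 ∈ Set.Iio (m-1) from hj1) (show j2 ∈ Set.Iio (m-1) from hj2)
          heq
        exact hB2 (hjj ▸ hA)
      · exact hDBZ2 _ (hbB j1 hj1) (by rw [heq]; exact hfmZ2 _)
    · -- j1 not hosted, j2 hosted
      have hS1 : ((j1, true) ∈ S ∧ (j1, false) ∈ S) := ⟨hjS j1 hj1 hA true, hjS j1 hj1 hA false⟩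
      obtain ⟨hi2, hh2⟩ := hchoose j2 hB2
      have hv1 : (trip j1).1 = fm ⟨(j1,true), hS1.1⟩ := by rw [htripN j1 hA hS1]
      have hv2 : (trip j1).2.1 = b j1 := by rw [htripN j1 hA hS1]
      have hv3 : (trip j1).2.2 = fm ⟨(j1,false), hS1.2⟩ := by rw [htripN j1 hA hS1]
      have hw1 : (trip j2).1 = zT (Classical.choose hB2) := by rw [htripH j2 hB2]
      have hw2 : (trip j2).2.1 = nb (Classical.choose hB2) := by rw [htripH j2 hB2]
      have hw3 : (trip j2).2.2 = b j2 := by rw [htripH j2 hB2]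
      exfalso
      interval_cases c1 <;> interval_cases c2 <;>
        ((try norm_num at heq); (try simp only [hv1, hv2, hv3, hw1, hw2, hw3] at heq))
      · exact hDTZ2 _ (hzTmem _ hi2) (by rw [← heq]; exact hfmZ2 _)
      · exact hDNBZ2 _ (Finset.mem_image_of_mem nb (Finset.mem_range.2 hi2))
          (by rw [← heq]; exact hfmZ2 _)
      · exact hDBZ2 _ (hbB j2 hj2) (by rw [← heq]; exact hfmZ2 _)
      · exact (hzTB _ hi2) (by rw [← heq]; exact hbB j1 hj1)
      · exact (hnbB _ hi2) (by rw [← heq]; exact hbB j1 hj1)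
      · have hjj := hbinj (show j1 ∈ Set.Iio (m-1) from hj1) (show j2 ∈ Set.Iio (m-1) from hj2)
          heq
        exact hA (hjj ▸ hB2)
      · exact hDTZ2 _ (hzTmem _ hi2) (by rw [← heq]; exact hfmZ2 _)
      · exact hDNBZ2 _ (Finset.mem_image_of_mem nb (Finset.mem_range.2 hi2))
          (by rw [← heq]; exact hfmZ2 _)
      · exact hDBZ2 _ (hbB j2 hj2) (by rw [← heq]; exact hfmZ2 _)
    · -- both not hosted
      have hS1 : ((j1, true) ∈ S ∧ (j1, false) ∈ S) := ⟨hjS j1 hj1 hA true, hjS j1 hj1 hA false⟩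
      have hS2 : ((j2, true) ∈ S ∧ (j2, false) ∈ S) := ⟨hjS j2 hj2 hB2 true, hjS j2 hj2 hB2 false⟩
      have hv1 : (trip j1).1 = fm ⟨(j1,true), hS1.1⟩ := by rw [htripN j1 hA hS1]
      have hv2 : (trip j1).2.1 = b j1 := by rw [htripN j1 hA hS1]
      have hv3 : (trip j1).2.2 = fm ⟨(j1,false), hS1.2⟩ := by rw [htripN j1 hA hS1]
      have hw1 : (trip j2).1 = fm ⟨(j2,true), hS2.1⟩ := by rw [htripN j2 hB2 hS2]
      have hw2 : (trip j2).2.1 = b j2 := by rw [htripN j2 hB2 hS2]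
      have hw3 : (trip j2).2.2 = fm ⟨(j2,false), hS2.2⟩ := by rw [htripN j2 hB2 hS2]
      interval_cases c1 <;> interval_cases c2 <;>
        ((try norm_num at heq); (try simp only [hv1, hv2, hv3, hw1, hw2, hw3] at heq))
      · refine ⟨?_, rfl⟩
        have hval := congrArg (fun w => w.1.1) (hfminj heq)
        exact hval
      · exact ((hDBZ2 _ (hbB j2 hj2) (by rw [← heq]; exact hfmZ2 _))).elim
      · have hval : (true : Bool) = false := congrArg (fun w => w.1.2) (hfminj heq)
        exact Bool.noConfusion hval
      · exact ((hDBZ2 _ (hbB j1 hj1) (by rw [heq]; exact hfmZ2 _))).elim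
      · exact ⟨hbinj (show j1 ∈ Set.Iio (m-1) from hj1) (show j2 ∈ Set.Iio (m-1) from hj2)
          heq, rfl⟩
      · exact ((hDBZ2 _ (hbB j1 hj1) (by rw [heq]; exact hfmZ2 _))).elim
      · have hval : (false : Bool) = true := congrArg (fun w => w.1.2) (hfminj heq)
        exact Bool.noConfusion hval
      · exact ((hDBZ2 _ (hbB j2 hj2) (by rw [← heq]; exact hfmZ2 _))).elim
      · refine ⟨?_, rfl⟩
        have hval := congrArg (fun w => w.1.1) (hfminj heq)
        exact hval
  -- component membership in Z
  have hcompZ : ∀ j, j < m - 1 →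
      (trip j).1 ∈ Z ∧ (trip j).2.1 ∈ Z ∧ (trip j).2.2 ∈ Z := by
    intro j hj
    by_cases hA : hostedP j
    · rw [htripH j hA]
      obtain ⟨hi, hh⟩ := hchoose j hA
      exact ⟨hzTZ _ hi, hnbZ _ hi, hbZ j hj⟩
    · have hS1 : ((j, true) ∈ S ∧ (j, false) ∈ S) := ⟨hjS j hj hA true, hjS j hj hA false⟩
      rw [htripN j hA hS1]
      exact ⟨hZ2Z _ (hfmZ2 _), hbZ j hj, hZ2Z _ (hfmZ2 _)⟩
  -- the z-enumeration
  set zf : ℕ → Fin n := fun r =>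
    if r % 3 = 0 then (trip (r/3)).1 else if r % 3 = 1 then (trip (r/3)).2.1
    else (trip (r/3)).2.2 with hzfdef
  have hzf0 : ∀ j, zf (3*j) = (trip j).1 := by
    intro j
    show (if (3*j) % 3 = 0 then (trip ((3*j)/3)).1 else _) = _
    rw [if_pos (by omega), show (3*j)/3 = j by omega]
  have hzf1 : ∀ j, zf (3*j+1) = (trip j).2.1 := by
    intro j
    show (if (3*j+1) % 3 = 0 then _ else if (3*j+1) % 3 = 1 then (trip ((3*j+1)/3)).2.1 else _)
      = _
    rw [if_neg (by omega), if_pos (by omega), show (3*j+1)/3 = j by omega]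
  have hzf2 : ∀ j, zf (3*j+2) = (trip j).2.2 := by
    intro j
    show (if (3*j+2) % 3 = 0 then _ else if (3*j+2) % 3 = 1 then _ else (trip ((3*j+2)/3)).2.2)
      = _
    rw [if_neg (by omega), if_neg (by omega), show (3*j+2)/3 = j by omega]
  refine ⟨u, zf, huinj, huX, ?_, ?_, ?_, ?_, hu0, hu1⟩
  · -- InjOn zf
    intro r hr s hs heq
    simp only [Set.mem_Iio] at hr hs
    have hjr : r / 3 < m - 1 := by omega
    have hjs : s / 3 < m - 1 := by omega
    have hcr : r % 3 < 3 := by omega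
    have hcs : s % 3 < 3 := by omega
    have heq' : (if r % 3 = 0 then (trip (r/3)).1 else if r % 3 = 1 then (trip (r/3)).2.1
        else (trip (r/3)).2.2)
        = (if s % 3 = 0 then (trip (s/3)).1 else if s % 3 = 1 then (trip (s/3)).2.1
        else (trip (s/3)).2.2) := heq
    have := keyinj (r/3) hjr (s/3) hjs (r % 3) hcr (s % 3) hcs heq'
    omega
  · -- zf lands in Z
    intro i hi
    have hji : i / 3 < m - 1 := by omega
    have hcomp := hcompZ (i/3) hji
    show (if i % 3 = 0 then (trip (i/3)).1 else if i % 3 = 1 then (trip (i/3)).2.1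
      else (trip (i/3)).2.2) ∈ Z
    by_cases h0 : i % 3 = 0
    · rw [if_pos h0]; exact hcomp.1
    · by_cases h1 : i % 3 = 1
      · rw [if_neg h0, if_pos h1]; exact hcomp.2.1
      · rw [if_neg h0, if_neg h1]; exact hcomp.2.2
  · -- first edges
    intro j hj
    rw [hzf0, hzf1]
    by_cases hA : hostedP j
    · rw [htripH j hA]
      obtain ⟨hi, hh⟩ := hchoose j hA
      have hE := hedge1 _ hi
      rw [hh] at hE
      show ({u j, zT (Classical.choose hA), nb (Classical.choose hA)} : Finset (Fin n)) ∈ H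
      rw [tri12]
      exact hE
    · have hS1 : ((j, true) ∈ S ∧ (j, false) ∈ S) := ⟨hjS j hj hA true, hjS j hj hA false⟩
      rw [htripN j hA hS1]
      show ({u j, fm ⟨(j,true), hS1.1⟩, b j} : Finset (Fin n)) ∈ H
      have hadj := (Finset.mem_filter.1 (hfmmem ⟨(j,true), hS1.1⟩)).2
      simp only [if_true] at hadj
      rw [(tri23 (u j) (fm ⟨(j,true), hS1.1⟩) (b j)).trans
        (tri12 (u j) (b j) (fm ⟨(j,true), hS1.1⟩))]
      exact hadj
  · -- second edges
    intro j hj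
    rw [hzf1, hzf2]
    by_cases hA : hostedP j
    · rw [htripH j hA]
      obtain ⟨hi, hh⟩ := hchoose j hA
      have hE := hedge2 _ hi
      rw [hh] at hE
      show ({nb (Classical.choose hA), b j, u (j+1)} : Finset (Fin n)) ∈ H
      rw [(tri12 (nb (Classical.choose hA)) (b j) (u (j+1))).trans
        (tri23 (b j) (nb (Classical.choose hA)) (u (j+1)))]
      exact hE
    · have hS1 : ((j, true) ∈ S ∧ (j, false) ∈ S) := ⟨hjS j hj hA true, hjS j hj hA false⟩
      rw [htripN j hA hS1]
      show ({b j, fm ⟨(j,false), hS1.2⟩, u (j+1)} : Finset (Fin n)) ∈ H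
      have hadj := (Finset.mem_filter.1 (hfmmem ⟨(j,false), hS1.2⟩)).2
      simp only [Bool.false_eq_true, if_false, reduceIte] at hadj
      rw [tri23 (b j) (fm ⟨(j,false), hS1.2⟩) (u (j+1))]
      exact hadj

/-- Assemble a loose Hamilton path from an `X`-enumeration and a `Z`-enumeration
with the appropriate edges. -/
lemma assemblePath {n : ℕ} (H : Finset (Finset (Fin n))) (X Z : Finset (Fin n))
    (m : ℕ) (hm : 2 ≤ m) (hn : n = 4 * m - 3) (hd : Disjoint X Z)
    (u zf : ℕ → Fin n)
    (hu : Set.InjOn u (Set.Iio m)) (huX : ∀ i < m, u i ∈ X)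
    (hzf : Set.InjOn zf (Set.Iio (3 * (m - 1)))) (hzfZ : ∀ i < 3 * (m - 1), zf i ∈ Z)
    (e1 : ∀ j < m - 1, ({u j, zf (3 * j), zf (3 * j + 1)} : Finset (Fin n)) ∈ H)
    (e2 : ∀ j < m - 1, ({zf (3 * j + 1), zf (3 * j + 2), u (j + 1)} : Finset (Fin n)) ∈ H)
    (x₀ x₁ : Fin n) (hu0 : u 0 = x₀) (hu1 : u (m - 1) = x₁) :
    ∃ (k : ℕ) (v : ℕ → Fin n), IsLoosePath H k v ∧ pathVerts k v = Finset.univ ∧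
      v 0 = x₀ ∧ v (2 * k) = x₁ := by
  classical
  set k := 2 * (m - 1) with hk
  set v : ℕ → Fin n := fun r =>
    if r % 4 = 0 then u (r / 4) else zf (3 * (r / 4) + (r % 4 - 1)) with hv
  have hvinj : Set.InjOn v (Set.Iio (2 * k + 1)) := by
    intro r hr s hs heq
    simp only [Set.mem_Iio, hk] at hr hs
    change (if r % 4 = 0 then u (r / 4) else zf (3 * (r / 4) + (r % 4 - 1)))
      = (if s % 4 = 0 then u (s / 4) else zf (3 * (s / 4) + (s % 4 - 1))) at heq
    by_cases er : r % 4 = 0 <;> by_cases es : s % 4 = 0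
    · rw [if_pos er, if_pos es] at heq
      have := hu (show r / 4 ∈ Set.Iio m by simp only [Set.mem_Iio]; omega)
        (show s / 4 ∈ Set.Iio m by simp only [Set.mem_Iio]; omega) heq
      omega
    · rw [if_pos er, if_neg es] at heq
      have hxmem := huX (r / 4) (by omega)
      have hzmem : u (r / 4) ∈ Z := by
        rw [heq]; exact hzfZ (3 * (s / 4) + (s % 4 - 1)) (by omega)
      exact ((Finset.disjoint_left.1 hd hxmem) hzmem).elim
    · rw [if_neg er, if_pos es] at heq
      have hxmem := huX (s / 4) (by omega)
      have hzmem : u (s / 4) ∈ Z := by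
        rw [← heq]; exact hzfZ (3 * (r / 4) + (r % 4 - 1)) (by omega)
      exact ((Finset.disjoint_left.1 hd hxmem) hzmem).elim
    · rw [if_neg er, if_neg es] at heq
      have := hzf (show 3 * (r / 4) + (r % 4 - 1) ∈ Set.Iio (3 * (m-1)) by
          simp only [Set.mem_Iio]; omega)
        (show 3 * (s / 4) + (s % 4 - 1) ∈ Set.Iio (3 * (m-1)) by
          simp only [Set.mem_Iio]; omega) heq
      omega
  refine ⟨k, v, ⟨hvinj, ?_⟩, ?_, ?_, ?_⟩
  · -- edges
    intro i hi
    rcases Nat.even_or_odd i with ⟨j, hj⟩ | ⟨j, hj⟩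
    · have hjm : j < m - 1 := by omega
      have h0 : v (2 * i) = u j := by
        show (if (2*i) % 4 = 0 then u ((2*i) / 4) else _) = u j
        have : (2*i) % 4 = 0 := by omega
        rw [if_pos this]
        congr 1; omega
      have h1 : v (2 * i + 1) = zf (3 * j) := by
        show (if (2*i+1) % 4 = 0 then _ else zf (3 * ((2*i+1) / 4) + ((2*i+1) % 4 - 1))) = _
        have h4 : (2*i+1) % 4 = 1 := by omega
        rw [if_neg (by omega)]
        congr 1; omega
      have h2 : v (2 * i + 2) = zf (3 * j + 1) := by
        show (if (2*i+2) % 4 = 0 then _ else zf (3 * ((2*i+2) / 4) + ((2*i+2) % 4 - 1))) = _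
        rw [if_neg (by omega)]
        congr 1; omega
      rw [h0, h1, h2]
      exact e1 j hjm
    · have hjm : j < m - 1 := by omega
      have h0 : v (2 * i) = zf (3 * j + 1) := by
        show (if (2*i) % 4 = 0 then _ else zf (3 * ((2*i) / 4) + ((2*i) % 4 - 1))) = _
        rw [if_neg (by omega)]
        congr 1; omega
      have h1 : v (2 * i + 1) = zf (3 * j + 2) := by
        show (if (2*i+1) % 4 = 0 then _ else zf (3 * ((2*i+1) / 4) + ((2*i+1) % 4 - 1))) = _
        rw [if_neg (by omega)]
        congr 1; omega
      have h2 : v (2 * i + 2) = u (j + 1) := by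
        show (if (2*i+2) % 4 = 0 then u ((2*i+2)/4) else _) = _
        rw [if_pos (by omega)]
        congr 1; omega
      rw [h0, h1, h2]
      exact e2 j hjm
  · -- spanning
    apply Finset.eq_univ_of_card
    rw [pathVerts]
    rw [Finset.card_image_of_injOn (by rw [Finset.coe_range]; exact hvinj)]
    rw [Finset.card_range]
    simp only [hk, Fintype.card_fin]
    omega
  · show (if 0 % 4 = 0 then u (0 / 4) else _) = x₀
    rw [if_pos (by omega)]
    simpa using hu0
  · show (if (2*k) % 4 = 0 then u ((2*k) / 4) else _) = x₁
    rw [if_pos (by omega)]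
    have : 2 * k / 4 = m - 1 := by omega
    rw [this, hu1]

end Auxiliary

/-- For sufficiently small `ρ > 0` and sufficiently large `n`: if `V(H) = X ∪̇ Z` with
`|Z| = 3(|X| - 1)`, every `v ∈ X` misses at most `ρ C(|Z|,2)` pairs of `Z`, and every
`v ∈ Z` misses at most `ρ|X||Z|` pairs `(x, z) ∈ X × (Z \ {v})`, then for any two vertices
`x₀ ≠ x₁` of `X` there is a spanning loose path of `H` from `x₀` to `x₁`. -/
theorem stmt_14 :
    ∃ ρ₀ : ℝ, 0 < ρ₀ ∧ ∀ ρ : ℝ, 0 < ρ → ρ ≤ ρ₀ →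
    ∃ n₀ : ℕ, ∀ n : ℕ, n > n₀ →
    ∀ H : Finset (Finset (Fin n)), (∀ e ∈ H, e.card = 3) →
    ∀ X Z : Finset (Fin n), Disjoint X Z → X ∪ Z = Finset.univ →
    Z.card + 3 = 3 * X.card →
    (∀ v ∈ X, (((Z.powersetCard 2).filter (fun p => insert v p ∉ H)).card : ℝ)
        ≤ ρ * (Z.card.choose 2 : ℝ)) →
    (∀ v ∈ Z, (((X ×ˢ (Z.erase v)).filter
        (fun q => ({v, q.1, q.2} : Finset (Fin n)) ∉ H)).card : ℝ)
        ≤ ρ * (X.card : ℝ) * (Z.card : ℝ)) →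
    ∀ x₀ x₁ : Fin n, x₀ ∈ X → x₁ ∈ X → x₀ ≠ x₁ →
    ∃ (k : ℕ) (v : ℕ → Fin n), IsLoosePath H k v ∧ pathVerts k v = Finset.univ ∧
      v 0 = x₀ ∧ v (2 * k) = x₁ := by
  refine ⟨1/10000, by norm_num, ?_⟩
  intro ρ hρpos hρle
  refine ⟨1000000, ?_⟩
  intro n hn H _hH3 X Z hd hunion hcard hXρ hZρ x₀ x₁ hx0 hx1 hne
  have hXZcard : X.card + Z.card = n := by
    have h1 := Finset.card_union_of_disjoint hd
    rw [hunion, Finset.card_univ, Fintype.card_fin] at h1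
    omega
  have hm1 : 1 ≤ X.card := by omega
  have hq3 : Z.card = 3 * (X.card - 1) := by omega
  have hm : 250001 ≤ X.card := by omega
  have hXn : ∀ x ∈ X,
      10000 * ((Z.powersetCard 2).filter (fun p => insert x p ∉ H)).card ≤ Z.card.choose 2 := by
    intro x hx
    have h1 := hXρ x hx
    have h2 : ρ * (Z.card.choose 2 : ℝ) ≤ (1/10000) * (Z.card.choose 2 : ℝ) :=
      mul_le_mul_of_nonneg_right hρle (Nat.cast_nonneg _)
    have h3 : (10000 : ℝ) * (((Z.powersetCard 2).filter (fun p => insert x p ∉ H)).card : ℝ)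
        ≤ (Z.card.choose 2 : ℝ) := by linarith
    exact_mod_cast h3
  have hZn : ∀ z ∈ Z, 10000 * (((X ×ˢ (Z.erase z)).filter
      (fun q => ({z, q.1, q.2} : Finset (Fin n)) ∉ H)).card) ≤ X.card * Z.card := by
    intro z hz
    have h1 := hZρ z hz
    have h2 : ρ * (X.card : ℝ) * (Z.card : ℝ) ≤ (1/10000) * ((X.card : ℝ) * (Z.card : ℝ)) := by
      have h4 : ρ * (X.card : ℝ) ≤ (1/10000) * (X.card : ℝ) :=
        mul_le_mul_of_nonneg_right hρle (Nat.cast_nonneg _)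
      have h5 : ρ * (X.card : ℝ) * (Z.card : ℝ) ≤ (1/10000) * (X.card : ℝ) * (Z.card : ℝ) :=
        mul_le_mul_of_nonneg_right h4 (Nat.cast_nonneg _)
      linarith
    have h3 : (10000 : ℝ) * ((((X ×ˢ (Z.erase z)).filter
        (fun q => ({z, q.1, q.2} : Finset (Fin n)) ∉ H)).card) : ℝ)
        ≤ ((X.card : ℝ) * (Z.card : ℝ)) := by linarith
    exact_mod_cast h3
  obtain ⟨u, zf, huinj, huX, hzfinj, hzfZ, he1, he2, hu0, hu1⟩ :=
    corePath H X Z hd hm hq3 hXn hZn x₀ x₁ hx0 hx1 hne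
  exact assemblePath H X Z X.card (by omega) (by omega) hd u zf huinj huX hzfinj hzfZ
    he1 he2 x₀ x₁ hu0 hu1
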